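/- Let w1 = exp((π/2)·(X_{α1} − X_{−α1})) and w2 = exp((π/2)·(X_{α2} − X_{−α2})), where exp is the matrix exponential. Then w1·H1·w1^{−1} = H2, w1·H2·w1^{−1} = H1, w2·H1·w2^{−1} = H1, and w2·H2·w2^{−1} = −H2. -/

import Mathlib

namespace Stmt15

noncomputable section

open Matrix
open scoped Nat

/-- `E a b` is the 4×4 real matrix with a single 1 in position `(a,b)`. -/
def E (a b : Fin 4) : Matrix (Fin 4) (Fin 4) ℝ := Matrix.single a b 1

def H1 : Matrix (Fin 4) (Fin 4) ℝ := E 0 0 - E 2 2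
def H2 : Matrix (Fin 4) (Fin 4) ℝ := E 1 1 - E 3 3
def Xa1 : Matrix (Fin 4) (Fin 4) ℝ := E 0 1 - E 3 2
def Xa2 : Matrix (Fin 4) (Fin 4) ℝ := E 1 3

/-- The simple Weyl reflection `w_{α1} = exp((π/2)(X_{α1} − X_{−α1}))`. -/
def w1 : Matrix (Fin 4) (Fin 4) ℝ := NormedSpace.exp ((Real.pi / 2) • (Xa1 - Xa1ᵀ))

/-- The simple Weyl reflection `w_{α2} = exp((π/2)(X_{α2} − X_{−α2}))`. -/
def w2 : Matrix (Fin 4) (Fin 4) ℝ := NormedSpace.exp ((Real.pi / 2) • (Xa2 - Xa2ᵀ))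

section Aux

lemma pow_odd_aux (a : Matrix (Fin 4) (Fin 4) ℝ) (h : a * a * a = -a) (k : ℕ) :
    a ^ (2 * k + 1) = ((-1 : ℝ) ^ k) • a := by
  induction k with
  | zero => simp
  | succ n ih =>
    have : 2 * (n + 1) + 1 = (2 * n + 1) + 2 := by ring
    rw [this, pow_add, ih, pow_two, smul_mul_assoc, ← mul_assoc, h, pow_succ]
    module

lemma pow_even_aux (a : Matrix (Fin 4) (Fin 4) ℝ) (h : a * a * a = -a) (k : ℕ) :
    a ^ (2 * (k + 1)) = ((-1 : ℝ) ^ k) • (a * a) := by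
  have : 2 * (k + 1) = (2 * k + 1) + 1 := by ring
  rw [this, pow_succ, pow_odd_aux a h k, smul_mul_assoc]

set_option maxHeartbeats 1000000 in
lemma exp_cube (a : Matrix (Fin 4) (Fin 4) ℝ) (h : a * a * a = -a) (t : ℝ) :
    NormedSpace.exp (t • a) =
      1 + Real.sin t • a + (1 - Real.cos t) • (a * a) := by
  have key : HasSum (fun n : ℕ => ((n ! : ℝ)⁻¹) • (t • a) ^ n)
      (1 + Real.sin t • a + (1 - Real.cos t) • (a * a)) := by
    have hodd : HasSum (fun k : ℕ => (((2 * k + 1)! : ℝ)⁻¹) • (t • a) ^ (2 * k + 1))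
        (Real.sin t • a) := by
      have h1 := (Real.hasSum_sin t).smul_const a
      convert h1 using 2 with k
      rw [smul_pow, pow_odd_aux a h k, smul_smul, smul_smul]
      congr 1
      field_simp
    have heven : HasSum (fun k : ℕ => (((2 * k)! : ℝ)⁻¹) • (t • a) ^ (2 * k))
        (1 + (1 - Real.cos t) • (a * a)) := by
      have h0 : (Real.cos t - 1) + ∑ i ∈ Finset.range 1,
          ((-1 : ℝ) ^ i * t ^ (2 * i) / (2 * i)!) = Real.cos t := by simp
      have h1 := (hasSum_nat_add_iff
        (f := fun n : ℕ => ((-1 : ℝ) ^ n * t ^ (2 * n) / (2 * n)!)) 1).mpr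
        (h0 ▸ Real.hasSum_cos t)
      have h2 := (h1.neg.smul_const (a * a))
      have h3 : HasSum (fun k : ℕ => (((2 * (k + 1))! : ℝ)⁻¹) • (t • a) ^ (2 * (k + 1)))
          ((1 - Real.cos t) • (a * a)) := by
        convert h2 using 2 with k
        · rw [smul_pow, pow_even_aux a h k, smul_smul, smul_smul]
          congr 1
          field_simp
          ring
        · rw [neg_sub]
      have h4 := (hasSum_nat_add_iff
        (f := fun k : ℕ => (((2 * k)! : ℝ)⁻¹) • (t • a) ^ (2 * k)) 1).mp h3
      have h5 : (1 - Real.cos t) • (a * a) + ∑ i ∈ Finset.range 1,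
          (((2 * i)! : ℝ)⁻¹) • (t • a) ^ (2 * i) = 1 + (1 - Real.cos t) • (a * a) := by
        simp [add_comm]
      rwa [h5] at h4
    have h6 := HasSum.even_add_odd (f := fun n : ℕ => ((n ! : ℝ)⁻¹) • (t • a) ^ n) heven hodd
    convert h6 using 1
    abel
  rw [NormedSpace.exp_eq_tsum (𝕂 := ℝ)]
  exact key.tsum_eq

def Bm : Matrix (Fin 4) (Fin 4) ℝ := !![0,1,0,0; -1,0,0,0; 0,0,0,1; 0,0,-1,0]
def W2t : Matrix (Fin 4) (Fin 4) ℝ := !![1,0,0,0; 0,0,0,-1; 0,0,1,0; 0,1,0,0]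
def H1m : Matrix (Fin 4) (Fin 4) ℝ := !![1,0,0,0; 0,0,0,0; 0,0,-1,0; 0,0,0,0]
def H2m : Matrix (Fin 4) (Fin 4) ℝ := !![0,0,0,0; 0,1,0,0; 0,0,0,0; 0,0,0,-1]
def W2 : Matrix (Fin 4) (Fin 4) ℝ := !![1,0,0,0; 0,0,0,1; 0,0,1,0; 0,-1,0,0]
def Cm : Matrix (Fin 4) (Fin 4) ℝ := !![0,0,0,0; 0,0,0,1; 0,0,0,0; 0,-1,0,0]

lemma hBm : Xa1 - Xa1ᵀ = Bm := by
  ext i j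
  fin_cases i <;> fin_cases j <;>
    simp [Xa1, E, Bm, Matrix.single, Matrix.vecHead, Matrix.vecTail, Function.comp]

lemma hCm : Xa2 - Xa2ᵀ = Cm := by
  ext i j
  fin_cases i <;> fin_cases j <;>
    simp [Xa2, E, Cm, Matrix.single, Matrix.vecHead, Matrix.vecTail, Function.comp]

lemma hB3 : Bm * Bm * Bm = -Bm := by
  ext i j
  fin_cases i <;> fin_cases j <;>
    simp [Bm, Matrix.mul_apply, Fin.sum_univ_four, Matrix.vecHead, Matrix.vecTail]

lemma hC3 : Cm * Cm * Cm = -Cm := by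
  ext i j
  fin_cases i <;> fin_cases j <;>
    simp [Cm, Matrix.mul_apply, Fin.sum_univ_four, Matrix.vecHead, Matrix.vecTail]

lemma hw1 : w1 = Bm := by
  rw [w1, hBm, exp_cube Bm hB3, Real.sin_pi_div_two, Real.cos_pi_div_two]
  ext i j
  fin_cases i <;> fin_cases j <;>
    simp [Bm, Matrix.mul_apply, Fin.sum_univ_four, Matrix.vecHead, Matrix.vecTail, Matrix.one_apply]

lemma hw2 : w2 = W2 := by
  rw [w2, hCm, exp_cube Cm hC3, Real.sin_pi_div_two, Real.cos_pi_div_two]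
  ext i j
  fin_cases i <;> fin_cases j <;>
    simp [Cm, W2, Matrix.mul_apply, Fin.sum_univ_four, Matrix.vecHead, Matrix.vecTail, Matrix.one_apply]

lemma hw1inv : w1⁻¹ = -Bm := by
  refine Matrix.inv_eq_right_inv ?_
  rw [hw1]
  ext i j
  fin_cases i <;> fin_cases j <;>
    simp [Bm, Matrix.mul_apply, Fin.sum_univ_four, Matrix.vecHead, Matrix.vecTail, Matrix.one_apply]

lemma hw2inv : w2⁻¹ = W2t := by
  refine Matrix.inv_eq_right_inv ?_
  rw [hw2]
  ext i j
  fin_cases i <;> fin_cases j <;>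
    simp [W2, W2t, Matrix.mul_apply, Fin.sum_univ_four, Matrix.vecHead, Matrix.vecTail, Matrix.one_apply]

lemma hH1 : H1 = H1m := by
  ext i j
  fin_cases i <;> fin_cases j <;>
    simp [H1, E, H1m, Matrix.single, Matrix.vecHead, Matrix.vecTail, Function.comp]

lemma hH2 : H2 = H2m := by
  ext i j
  fin_cases i <;> fin_cases j <;>
    simp [H2, E, H2m, Matrix.single, Matrix.vecHead, Matrix.vecTail, Function.comp]

end Aux

set_option maxHeartbeats 2000000 in
/-- The simple Weyl reflections of `Sp(4,ℝ)` act on the split Cartan subalgebra by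
`w1 : H1 ↔ H2` and `w2 : H1 ↦ H1, H2 ↦ −H2`. -/
theorem stmt_15 :
    w1 * H1 * w1⁻¹ = H2 ∧ w1 * H2 * w1⁻¹ = H1 ∧
      w2 * H1 * w2⁻¹ = H1 ∧ w2 * H2 * w2⁻¹ = -H2 := by
  rw [hw1inv, hw2inv, hw1, hw2, hH1, hH2]
  refine ⟨?_, ?_, ?_, ?_⟩ <;>
  · ext i j
    fin_cases i <;> fin_cases j <;>
      norm_num [Bm, W2, W2t, H1m, H2m, Matrix.mul_apply, Fin.sum_univ_four,
        Matrix.vecHead, Matrix.vecTail, Function.comp] <;> simp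

end

end Stmt15
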